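/- Let P, Q be programs and A a set of atoms. Then P ≡ᵘ_A Q (uniform equivalence relative to A) implies UE^A(P) = UE^A(Q); conversely, UE^A(P) = UE^A(Q) implies P ≡ᵘ_A Q whenever at least one of P, Q, or A is finite. -/

import Mathlib

structure Rule where
  head : Finset ℕ
  pos : Finset ℕ
  neg : Finset ℕ

abbrev Interp := Set ℕ
abbrev Program := Set Rule

/-- Classical satisfaction of a rule by an interpretation. -/
def Rule.satisfied (I : Interp) (r : Rule) : Prop :=
  ((↑r.pos ⊆ I) ∧ ∀ a ∈ r.neg, a ∉ I) → ∃ a ∈ r.head, a ∈ I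

/-- `I` is a classical model of the program `P`. -/
def Models (I : Interp) (P : Program) : Prop := ∀ r ∈ P, Rule.satisfied I r

/-- `X` models the Gelfond-Lifschitz reduct `P^Y`. -/
def ModelsReduct (X : Interp) (P : Program) (Y : Interp) : Prop :=
  ∀ r ∈ P, (∀ a ∈ r.neg, a ∉ Y) → (↑r.pos ⊆ X) → ∃ a ∈ r.head, a ∈ X

/-- `Y` is an answer set of `P`: a minimal model of the reduct `P^Y`. -/
def AnswerSet (P : Program) (Y : Interp) : Prop :=
  ModelsReduct Y P Y ∧ ∀ Z : Interp, Z ⊂ Y → ¬ ModelsReduct Z P Y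

/-- `(X,Y)` is an SE-model of `P`. -/
def SEModel (P : Program) (X Y : Interp) : Prop :=
  X ⊆ Y ∧ Models Y P ∧ ModelsReduct X P Y

/-- `(X,Y)` is a UE-model of `P`. -/
def UEModel (P : Program) (X Y : Interp) : Prop :=
  SEModel P X Y ∧ ∀ X', SEModel P X' Y → X ⊂ X' → X' = Y

/-- The program consisting of the atoms in `F` as facts. -/
def Facts (F : Set ℕ) : Program := { r | ∃ a ∈ F, r = ⟨{a}, ∅, ∅⟩ }

/-- Uniform equivalence of programs. -/
def UnifEquiv (P Q : Program) : Prop :=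
  ∀ F : Set ℕ, ∀ Y : Interp, AnswerSet (P ∪ Facts F) Y ↔ AnswerSet (Q ∪ Facts F) Y

/-- Strong equivalence of programs. -/
def StrongEquiv (P Q : Program) : Prop :=
  ∀ R : Program, ∀ Y : Interp, AnswerSet (P ∪ R) Y ↔ AnswerSet (Q ∪ R) Y

def Rule.atoms (r : Rule) : Finset ℕ := r.head ∪ r.pos ∪ r.neg

/-- All atoms occurring in `R` belong to `A`. -/
def ProgramOver (A : Set ℕ) (R : Program) : Prop := ∀ r ∈ R, ↑r.atoms ⊆ A

/-- Strong equivalence relative to a set of atoms `A`. -/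
def RelStrongEquiv (A : Set ℕ) (P Q : Program) : Prop :=
  ∀ R : Program, ProgramOver A R →
    ∀ Y : Interp, AnswerSet (P ∪ R) Y ↔ AnswerSet (Q ∪ R) Y

/-- Uniform equivalence relative to a set of atoms `A`. -/
def RelUnifEquiv (A : Set ℕ) (P Q : Program) : Prop :=
  ∀ F : Set ℕ, F ⊆ A →
    ∀ Y : Interp, AnswerSet (P ∪ Facts F) Y ↔ AnswerSet (Q ∪ Facts F) Y

/-- A unary rule: one head atom, no negation, at most one positive body atom. -/
def Unary (r : Rule) : Prop := r.head.card = 1 ∧ r.neg = ∅ ∧ r.pos.card ≤ 1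

/-- `(X,Y)` is a (relativized) `A`-SE-model of `P`. -/
def ASEModel (A : Set ℕ) (P : Program) (X Y : Interp) : Prop :=
  (X = Y ∨ X ⊂ Y ∩ A) ∧ Models Y P ∧
  (∀ Y' : Interp, Y' ⊂ Y → Y' ∩ A = Y ∩ A → ¬ ModelsReduct Y' P Y) ∧
  (X ⊂ Y → ∃ X' : Interp, X' ⊆ Y ∧ X' ∩ A = X ∧ ModelsReduct X' P Y)

/-- `(X,Y)` is a (relativized) `A`-UE-model of `P`. -/
def AUEModel (A : Set ℕ) (P : Program) (X Y : Interp) : Prop :=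
  ASEModel A P X Y ∧ ∀ X', ASEModel A P X' Y → X ⊂ X' → X' = Y

/-- A positive program: all rules have empty negative body. -/
def Positive (P : Program) : Prop := ∀ r ∈ P, r.neg = ∅

/-- Positive dependency: edge from a positive body atom to a head atom. -/
def Dep (P : Program) (a b : ℕ) : Prop := ∃ r ∈ P, a ∈ r.pos ∧ b ∈ r.head

/-- Head-cycle freeness: no directed cycle of the positive dependency graph
through two distinct head atoms of one rule. -/
def HCF (P : Program) : Prop :=
  ∀ r ∈ P, ∀ a ∈ r.head, ∀ b ∈ r.head, a ≠ b →
    ¬ (Relation.ReflTransGen (Dep P) a b ∧ Relation.ReflTransGen (Dep P) b a)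

/-- The shift of a single rule. -/
def Rule.shift (r : Rule) : Program :=
  if r.head = ∅ then {r}
  else { r' | ∃ a ∈ r.head, r' = ⟨{a}, r.pos, r.neg ∪ (r.head.erase a)⟩ }

/-- The shift of a program. -/
def shiftProg (P : Program) : Program := ⋃ r ∈ P, r.shift

/-- The set of SE-models of `P` as a set of pairs. -/
def SEset (P : Program) : Set (Interp × Interp) := { p | SEModel P p.1 p.2 }

/-! ### Auxiliary lemmas for stmt13 -/

lemma models_iff_reduct (Y : Interp) (P : Program) :
    Models Y P ↔ ModelsReduct Y P Y := by
  constructor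
  · intro h r hr hneg hpos
    exact h r hr ⟨hpos, hneg⟩
  · rintro h r hr ⟨hpos, hneg⟩
    exact h r hr hneg hpos

lemma modelsReduct_union_facts (Z : Interp) (P : Program) (F : Set ℕ) (Y : Interp) :
    ModelsReduct Z (P ∪ Facts F) Y ↔ ModelsReduct Z P Y ∧ F ⊆ Z := by
  constructor
  · intro h
    refine ⟨fun r hr => h r (Or.inl hr), fun a ha => ?_⟩
    have := h ⟨{a}, ∅, ∅⟩ (Or.inr ⟨a, ha, rfl⟩) (by simp) (by simp)
    simpa using this
  · rintro ⟨h1, h2⟩ r hr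
    rcases hr with hr | ⟨a, ha, rfl⟩
    · exact h1 r hr
    · intro _ _
      exact ⟨a, by simp, h2 ha⟩

/-- `(Y,Y)` is an `A`-SE-model of `P` iff `Y` is an answer set of `P ∪ (Y ∩ A)`. -/
lemma aseYY_iff (A : Set ℕ) (P : Program) (Y : Interp) :
    ASEModel A P Y Y ↔ AnswerSet (P ∪ Facts (Y ∩ A)) Y := by
  constructor
  · intro h
    refine ⟨(modelsReduct_union_facts _ _ _ _).2
      ⟨(models_iff_reduct _ _).1 h.2.1, Set.inter_subset_left⟩, ?_⟩
    intro Z hZ hred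
    obtain ⟨hred', hsub⟩ := (modelsReduct_union_facts _ _ _ _).1 hred
    have heq : Z ∩ A = Y ∩ A :=
      Set.Subset.antisymm (Set.inter_subset_inter_left A hZ.1)
        (Set.subset_inter hsub Set.inter_subset_right)
    exact h.2.2.1 Z hZ heq hred'
  · intro h
    obtain ⟨hred, hsub⟩ := (modelsReduct_union_facts _ _ _ _).1 h.1
    refine ⟨Or.inl rfl, (models_iff_reduct _ _).2 hred, ?_, ?_⟩
    · intro Y' hY' heq hred'
      have hsub' : Y ∩ A ⊆ Y' := heq ▸ Set.inter_subset_left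
      exact h.2 Y' hY' ((modelsReduct_union_facts _ _ _ _).2 ⟨hred', hsub'⟩)
    · intro hc
      exact absurd hc (ssubset_irrefl Y)

lemma aueYY_iff (A : Set ℕ) (P : Program) (Y : Interp) :
    AUEModel A P Y Y ↔ ASEModel A P Y Y := by
  constructor
  · exact fun h => h.1
  · intro h
    refine ⟨h, fun X' hX' hlt => ?_⟩
    rcases hX'.1 with rfl | hss
    · rfl
    · exact absurd (hss.1.trans Set.inter_subset_left) (fun hsub =>
        (ssubset_irrefl Y) (hlt.trans_subset hsub))

/-- From any `A`-SE-model, `(Y,Y)` is one as well. -/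
lemma aseYY_of_ase {A : Set ℕ} {P : Program} {X Y : Interp}
    (h : ASEModel A P X Y) : ASEModel A P Y Y :=
  ⟨Or.inl rfl, h.2.1, h.2.2.1, fun hc => absurd hc (ssubset_irrefl Y)⟩

lemma RelUnifEquiv.symm' {A : Set ℕ} {P Q : Program}
    (h : RelUnifEquiv A P Q) : RelUnifEquiv A Q P :=
  fun F hF Y => (h F hF Y).symm

/-- Transfer a counter-witness to minimality through relativized uniform equivalence. -/
lemma not_as_transfer {A : Set ℕ} {P Q : Program} (hU : RelUnifEquiv A P Q)
    {S : Set ℕ} (hSA : S ⊆ A) {Y W : Interp}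
    (hWY : W ⊂ Y) (hSW : S ⊆ W) (hWred : ModelsReduct W P Y)
    (hQ : Models Y Q) :
    ∃ Z : Interp, Z ⊂ Y ∧ S ⊆ Z ∧ ModelsReduct Z Q Y := by
  have h1 : ¬ AnswerSet (P ∪ Facts S) Y := fun has =>
    has.2 W hWY ((modelsReduct_union_facts _ _ _ _).2 ⟨hWred, hSW⟩)
  have h2 : ¬ AnswerSet (Q ∪ Facts S) Y := fun has => h1 ((hU S hSA Y).2 has)
  by_contra hc
  push_neg at hc
  refine h2 ⟨(modelsReduct_union_facts _ _ _ _).2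
    ⟨(models_iff_reduct _ _).1 hQ, hSW.trans hWY.1⟩, ?_⟩
  intro Z hZ hred
  obtain ⟨hred', hsub⟩ := (modelsReduct_union_facts _ _ _ _).1 hred
  exact hc Z hZ hsub hred'

lemma waeq_contra {A : Set ℕ} {W Y : Interp}
    (h1 : W ∩ A = Y) (h2 : W ∩ A ≠ Y ∩ A) : False := by
  have : Y ⊆ A := h1 ▸ Set.inter_subset_right
  exact h2 (by rw [h1, Set.inter_eq_self_of_subset_left this])

lemma forward_one (A : Set ℕ) (P Q : Program)
    (hU : RelUnifEquiv A P Q) (X Y : Interp)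
    (h : AUEModel A P X Y) : AUEModel A Q X Y := by
  have hYYP : ASEModel A P Y Y := aseYY_of_ase h.1
  have hYYQ : ASEModel A Q Y Y := (aseYY_iff A Q Y).2
    ((hU (Y ∩ A) Set.inter_subset_right Y).1 ((aseYY_iff A P Y).1 hYYP))
  rcases h.1.1 with rfl | hXA
  · exact (aueYY_iff A Q X).2 hYYQ
  · have hXsubA : X ⊆ A := hXA.1.trans Set.inter_subset_right
    have hXY : X ⊂ Y := hXA.trans_subset Set.inter_subset_left
    obtain ⟨X', hX'Y, hX'A, hX'red⟩ := h.1.2.2.2 hXY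
    have hX'ssY : X' ⊂ Y := by
      refine Set.ssubset_iff_subset_ne.2 ⟨hX'Y, fun he => ?_⟩
      exact hXA.ne (by rw [← hX'A, he])
    have hXX' : X ⊆ X' := hX'A ▸ Set.inter_subset_left
    obtain ⟨Z, hZY, hXZ, hZred⟩ := not_as_transfer hU hXsubA hX'ssY hXX' hX'red hYYQ.2.1
    have hZ₁ne : Z ∩ A ≠ Y ∩ A := fun he => hYYQ.2.2.1 Z hZY he hZred
    obtain ⟨W, hWY, hZ₁W, hWred⟩ := not_as_transfer hU.symm' (Set.inter_subset_right (s := Z))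
      hZY (Set.inter_subset_left) hZred h.1.2.1
    have hWAne : W ∩ A ≠ Y ∩ A := fun he => h.1.2.2.1 W hWY he hWred
    have hWAsub : W ∩ A ⊆ Y ∩ A := Set.inter_subset_inter_left A hWY.1
    have hXWA : X ⊆ W ∩ A :=
      Set.subset_inter ((Set.subset_inter hXZ hXsubA).trans hZ₁W) hXsubA
    have haseW : ASEModel A P (W ∩ A) Y :=
      ⟨Or.inr (Set.ssubset_iff_subset_ne.2 ⟨hWAsub, hWAne⟩), h.1.2.1, h.1.2.2.1,
        fun _ => ⟨W, hWY.1, rfl, hWred⟩⟩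
    have hWAeq : W ∩ A = X := by
      by_contra hne
      exact waeq_contra (h.2 (W ∩ A) haseW (Set.ssubset_iff_subset_ne.2 ⟨hXWA, Ne.symm hne⟩)) hWAne
    have hZ₁eq : Z ∩ A = X := Set.Subset.antisymm
      (hWAeq ▸ Set.subset_inter hZ₁W Set.inter_subset_right)
      (Set.subset_inter hXZ hXsubA)
    refine ⟨⟨Or.inr hXA, hYYQ.2.1, hYYQ.2.2.1, fun _ => ⟨Z, hZY.1, hZ₁eq, hZred⟩⟩, ?_⟩
    intro X'' hX'' hlt
    rcases hX''.1 with rfl | hX''A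
    · rfl
    · exfalso
      have hX''Y : X'' ⊂ Y := hX''A.trans_subset Set.inter_subset_left
      obtain ⟨Z'', hZ''Y, hZ''A, hZ''red⟩ := hX''.2.2.2 hX''Y
      have hZ''ssY : Z'' ⊂ Y := by
        refine Set.ssubset_iff_subset_ne.2 ⟨hZ''Y, fun he => ?_⟩
        exact hX''A.ne (by rw [← hZ''A, he])
      have hX''Z'' : X'' ⊆ Z'' := hZ''A ▸ Set.inter_subset_left
      obtain ⟨W', hW'Y, hX''W', hW'red⟩ := not_as_transfer hU.symm'
        (hX''A.1.trans Set.inter_subset_right) hZ''ssY hX''Z'' hZ''red h.1.2.1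
      have hW'Ane : W' ∩ A ≠ Y ∩ A := fun he => h.1.2.2.1 W' hW'Y he hW'red
      have haseW' : ASEModel A P (W' ∩ A) Y :=
        ⟨Or.inr (Set.ssubset_iff_subset_ne.2
          ⟨Set.inter_subset_inter_left A hW'Y.1, hW'Ane⟩), h.1.2.1, h.1.2.2.1,
          fun _ => ⟨W', hW'Y.1, rfl, hW'red⟩⟩
      have hXW' : X ⊂ W' ∩ A := hlt.trans_subset
        (Set.subset_inter hX''W' (hX''A.1.trans Set.inter_subset_right))
      exact waeq_contra (h.2 (W' ∩ A) haseW' hXW') hW'Ane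

/-- The set of atoms of a program. -/
def AtSet (P : Program) : Set ℕ := ⋃ r ∈ P, ↑r.atoms

lemma atSet_finite {P : Program} (hP : P.Finite) : (AtSet P).Finite :=
  Set.Finite.biUnion hP (fun r _ => r.atoms.finite_toSet)

/-- Answer sets are contained in the atoms of the program together with the facts. -/
lemma answerSet_subset {P : Program} {F : Set ℕ} {Y : Interp}
    (h : AnswerSet (P ∪ Facts F) Y) : Y ⊆ AtSet P ∪ F := by
  by_contra hc
  obtain ⟨a, haY, ha⟩ := Set.not_subset.1 hc
  have ha1 : a ∉ AtSet P := fun h => ha (Or.inl h)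
  have ha2 : a ∉ F := fun h => ha (Or.inr h)
  refine h.2 (Y \ {a}) (Set.sdiff_singleton_ssubset.2 haY) ?_
  refine (modelsReduct_union_facts _ _ _ _).2 ⟨?_, ?_⟩
  · intro r hr hneg hpos
    obtain ⟨hred, _⟩ := (modelsReduct_union_facts _ _ _ _).1 h.1
    obtain ⟨b, hb, hbY⟩ := hred r hr hneg (hpos.trans Set.diff_subset)
    refine ⟨b, hb, hbY, fun hba => ?_⟩
    apply ha1
    simp only [Set.mem_singleton_iff] at hba
    subst hba
    exact Set.mem_biUnion hr (by simp [Rule.atoms, hb])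
  · intro b hbF
    obtain ⟨_, hsub⟩ := (modelsReduct_union_facts _ _ _ _).1 h.1
    exact ⟨hsub hbF, fun hba => ha2 (by simpa using hba ▸ hbF)⟩

/-- If every member of `T` is of the form `X₀ ∪ s` with `s ⊆ C` for a finite `C`,
and `T` is nonempty, then `T` has a maximal element. -/
lemma exists_maximal_of_bounded {T : Set (Set ℕ)} {X₀ C : Set ℕ} (hC : C.Finite)
    (hbound : ∀ X ∈ T, X₀ ⊆ X ∧ X ⊆ X₀ ∪ C) (hne : T.Nonempty) :
    ∃ M ∈ T, ∀ X ∈ T, M ⊆ X → X = M := by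
  have hTfin : T.Finite := by
    have : T ⊆ (fun s => X₀ ∪ s) '' {s | s ⊆ C} := by
      intro X hX
      refine ⟨X ∩ C, Set.inter_subset_right, ?_⟩
      have h1 := (hbound X hX).1
      have h2 := (hbound X hX).2
      apply Set.Subset.antisymm
      · exact Set.union_subset h1 Set.inter_subset_left
      · intro x hx
        rcases h2 hx with hx0 | hxC
        · exact Set.mem_union_left _ hx0
        · exact Set.mem_union_right _ ⟨hx, hxC⟩
    exact Set.Finite.subset (Set.Finite.image _ hC.finite_subsets) this
  obtain ⟨M, hM⟩ := hTfin.exists_maximal hne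
  exact ⟨M, hM.1, fun X hX hMX => (hM.eq_of_le hX hMX).symm⟩

lemma backward_one (A : Set ℕ) (P Q : Program)
    (hfin : P.Finite ∨ Q.Finite ∨ A.Finite)
    (hiff : ∀ X Y : Interp, AUEModel A P X Y ↔ AUEModel A Q X Y)
    (F : Set ℕ) (hFA : F ⊆ A) (Y : Interp)
    (hAS : AnswerSet (P ∪ Facts F) Y) : AnswerSet (Q ∪ Facts F) Y := by
  obtain ⟨hPred, hFY⟩ := (modelsReduct_union_facts _ _ _ _).1 hAS.1
  have hYYP : ASEModel A P Y Y := by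
    refine ⟨Or.inl rfl, (models_iff_reduct _ _).2 hPred, ?_, fun hc => absurd hc (ssubset_irrefl Y)⟩
    intro Y' hY' heq hred
    have hFY' : F ⊆ Y' := fun a ha => (heq ▸ (Set.mem_inter (hFY ha) (hFA ha)) : a ∈ Y' ∩ A).1
    exact hAS.2 Y' hY' ((modelsReduct_union_facts _ _ _ _).2 ⟨hred, hFY'⟩)
  have hYYQ : ASEModel A Q Y Y := ((aueYY_iff A Q Y).1 ((hiff Y Y).1 ((aueYY_iff A P Y).2 hYYP)))
  by_contra hnQ
  -- extract a counter-witness to minimality for `Q ∪ F`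
  have hex : ∃ Z : Interp, Z ⊂ Y ∧ F ⊆ Z ∧ ModelsReduct Z Q Y := by
    by_contra hc
    push_neg at hc
    refine hnQ ⟨(modelsReduct_union_facts _ _ _ _).2 ⟨(models_iff_reduct _ _).1 hYYQ.2.1, hFY⟩, ?_⟩
    intro Z hZ hred
    obtain ⟨hred', hsub⟩ := (modelsReduct_union_facts _ _ _ _).1 hred
    exact hc Z hZ hsub hred'
  obtain ⟨Z, hZY, hFZ, hZred⟩ := hex
  set X₀ : Set ℕ := Z ∩ A with hX₀def
  have hFX₀ : F ⊆ X₀ := Set.subset_inter hFZ hFA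
  have hX₀ss : X₀ ⊂ Y ∩ A := Set.ssubset_iff_subset_ne.2
    ⟨Set.inter_subset_inter_left A hZY.1, fun he => hYYQ.2.2.1 Z hZY he hZred⟩
  set T : Set (Set ℕ) :=
    {X | X₀ ⊆ X ∧ X ⊂ Y ∩ A ∧ ∃ W : Interp, W ⊆ Y ∧ W ∩ A = X ∧ ModelsReduct W Q Y} with hTdef
  have hX₀T : X₀ ∈ T := ⟨Set.Subset.rfl, hX₀ss, Z, hZY.1, rfl, hZred⟩
  -- find a maximal element of T
  have hmax : ∃ M ∈ T, ∀ X ∈ T, M ⊆ X → X = M := by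
    rcases hfin with hPf | hQf | hAf
    · -- P finite
      have hYsub : Y ⊆ AtSet P ∪ F := answerSet_subset hAS
      refine exists_maximal_of_bounded (X₀ := X₀) (atSet_finite hPf) ?_ ⟨X₀, hX₀T⟩
      rintro X ⟨h1, h2, _⟩
      refine ⟨h1, fun x hx => ?_⟩
      rcases hYsub (h2.1 hx).1 with hA | hF
      · exact Set.mem_union_right _ hA
      · exact Set.mem_union_left _ (hFX₀ hF)
    · -- Q finite
      by_cases hc : Y ∩ A ⊆ X₀ ∪ AtSet Q
      · refine exists_maximal_of_bounded (X₀ := X₀) (atSet_finite hQf) ?_ ⟨X₀, hX₀T⟩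
        rintro X ⟨h1, h2, _⟩
        exact ⟨h1, h2.1.trans hc⟩
      · obtain ⟨a, haYA, ha⟩ := Set.not_subset.1 hc
        have haX₀ : a ∉ X₀ := fun h => ha (Set.mem_union_left _ h)
        have haB : a ∉ AtSet Q := fun h => ha (Set.mem_union_right _ h)
        refine ⟨(Y ∩ A) \ {a}, ⟨?_, ?_, Y \ {a}, Set.diff_subset, ?_, ?_⟩, ?_⟩
        · exact Set.subset_diff_singleton hX₀ss.1 haX₀
        · exact Set.sdiff_singleton_ssubset.2 haYA
        · ext x
          simp only [Set.mem_diff, Set.mem_inter_iff, Set.mem_singleton_iff]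
          tauto
        · intro r hr hneg hpos
          have hQredY := (models_iff_reduct _ _).1 hYYQ.2.1
          obtain ⟨b, hb, hbY⟩ := hQredY r hr hneg (hpos.trans Set.diff_subset)
          refine ⟨b, hb, hbY, fun hba => ?_⟩
          apply haB
          simp only [Set.mem_singleton_iff] at hba
          subst hba
          exact Set.mem_biUnion hr (by simp [Rule.atoms, hb])
        · rintro X ⟨_, hX2, _⟩ hMX
          by_contra hne
          have haX : a ∈ X := by
            by_contra haX
            exact hne (Set.Subset.antisymm (Set.subset_diff_singleton hX2.1 haX) hMX)
          have : Y ∩ A ⊆ X := by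
            intro x hx
            by_cases hxa : x = a
            · exact hxa ▸ haX
            · exact hMX ⟨hx, hxa⟩
          exact hX2.ne (Set.Subset.antisymm hX2.1 this)
    · -- A finite
      refine exists_maximal_of_bounded (X₀ := X₀) hAf ?_ ⟨X₀, hX₀T⟩
      rintro X ⟨h1, h2, _⟩
      exact ⟨h1, fun x hx => Set.mem_union_right _ ((h2.1 hx).2)⟩
  obtain ⟨M, ⟨hX₀M, hMss, W, hWY, hWA, hWred⟩, hMmax⟩ := hmax
  -- (M, Y) is an A-UE-model of Q
  have hQue : AUEModel A Q M Y := by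
    refine ⟨⟨Or.inr hMss, hYYQ.2.1, hYYQ.2.2.1, fun _ => ⟨W, hWY, hWA, hWred⟩⟩, ?_⟩
    intro X' hX' hlt
    rcases hX'.1 with rfl | hX'A
    · rfl
    · exfalso
      obtain ⟨W', hW'Y, hW'A, hW'red⟩ := hX'.2.2.2 (hX'A.trans_subset Set.inter_subset_left)
      have : X' ∈ T := ⟨hX₀M.trans hlt.1, hX'A, W', hW'Y, hW'A, hW'red⟩
      exact hlt.ne (hMmax X' this hlt.1).symm
  have hPue : AUEModel A P M Y := (hiff M Y).2 hQue
  obtain ⟨V, hVY, hVA, hVred⟩ := hPue.1.2.2.2 (hMss.trans_subset Set.inter_subset_left)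
  have hVssY : V ⊂ Y := by
    refine Set.ssubset_iff_subset_ne.2 ⟨hVY, fun he => ?_⟩
    exact hMss.ne (by rw [← hVA, he])
  have hMV : M ⊆ V := by rw [← hVA]; exact Set.inter_subset_left
  have hFV : F ⊆ V := (hFX₀.trans hX₀M).trans hMV
  exact hAS.2 V hVssY ((modelsReduct_union_facts _ _ _ _).2 ⟨hVred, hFV⟩)

theorem stmt13 (P Q : Program) (A : Set ℕ) :
    (RelUnifEquiv A P Q → ∀ X Y : Interp, AUEModel A P X Y ↔ AUEModel A Q X Y) ∧
    ((P.Finite ∨ Q.Finite ∨ A.Finite) →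
      (∀ X Y : Interp, AUEModel A P X Y ↔ AUEModel A Q X Y) → RelUnifEquiv A P Q) := by
  constructor
  · intro hU X Y
    exact ⟨forward_one A P Q hU X Y, forward_one A Q P hU.symm' X Y⟩
  · intro hfin hiff F hFA Y
    have hfin' : Q.Finite ∨ P.Finite ∨ A.Finite := by tauto
    exact ⟨backward_one A P Q hfin hiff F hFA Y,
      backward_one A Q P hfin' (fun X Y => (hiff X Y).symm) F hFA Y⟩
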